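/- There exist random variables X₁, X₂ that are uncorrelated but not independent, together with measurable functions f₁, f₂ : ℝ → ℝ such that f₁(X₁) = f₂(X₂) almost surely and f₁(X₁) is non-constant. Concretely: if Z is a standard Gaussian, X₁ = Z, X₂ = |Z|, then Cov(X₁, X₂) = 0, yet with f₁ = |·| and f₂ = id one has f₁(X₁) = f₂(X₂), which have correlation 1. -/

import Mathlib

open MeasureTheory ProbabilityTheory Real
open scoped ENNReal NNReal

noncomputable def gpdf : ℝ → ℝ := gaussianPDFReal 0 1

lemma gpdf_nonneg (x : ℝ) : 0 ≤ gpdf x := gaussianPDFReal_nonneg 0 1 x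
lemma gpdf_meas : Measurable gpdf := measurable_gaussianPDFReal 0 1
lemma gpdf_even (x : ℝ) : gpdf (-x) = gpdf x := by
  simp only [gpdf, gaussianPDFReal]
  ring_nf

lemma gpdf_eq (x : ℝ) : gpdf x = (√(2 * π))⁻¹ * rexp (-(1/2) * x ^ 2) := by
  have h1 : ((1:ℝ≥0):ℝ) = 1 := rfl
  simp only [gpdf, gaussianPDFReal, h1, mul_one, sub_zero]
  congr 1
  ring

lemma integral_gaussian_eq (f : ℝ → ℝ) :
    ∫ x, f x ∂(gaussianReal 0 1) = ∫ x, f x * gpdf x := by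
  rw [gaussianReal_of_var_ne_zero 0 one_ne_zero]
  have hd : gaussianPDF 0 1 = fun x => ((gpdf x).toNNReal : ℝ≥0∞) := by
    funext x; rfl
  have hm : Measurable (fun x => (gpdf x).toNNReal) := measurable_real_toNNReal.comp gpdf_meas
  rw [hd, integral_withDensity_eq_integral_smul hm f]
  congr 1
  funext x
  rw [NNReal.smul_def, smul_eq_mul, Real.coe_toNNReal _ (gpdf_nonneg x), mul_comm]

lemma integrable_gaussian_iff (f : ℝ → ℝ) :
    Integrable f (gaussianReal 0 1) ↔ Integrable (fun x => f x * gpdf x) volume := by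
  rw [gaussianReal_of_var_ne_zero 0 one_ne_zero]
  have hd : gaussianPDF 0 1 = fun x => ((gpdf x).toNNReal : ℝ≥0∞) := by
    funext x; rfl
  have hm : Measurable (fun x => (gpdf x).toNNReal) := measurable_real_toNNReal.comp gpdf_meas
  rw [hd, integrable_withDensity_iff_integrable_smul hm]
  apply integrable_congr
  filter_upwards with x
  rw [NNReal.smul_def, smul_eq_mul, Real.coe_toNNReal _ (gpdf_nonneg x), mul_comm]

lemma odd_integral_zero {f : ℝ → ℝ} (h : ∀ x, f (-x) = -f x) : ∫ x, f x = 0 := by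
  have h1 : ∫ x, f (-x) = ∫ x, f x := integral_neg_eq_self f volume
  have h2 : ∫ x, f (-x) = - ∫ x, f x := by
    simp_rw [h]; exact integral_neg f
  linarith

lemma int_xg : Integrable (fun x => x * gpdf x) volume := by
  have h := (integrable_rpow_mul_exp_neg_mul_sq (b := 1/2) (by norm_num)
    (s := 1) (by norm_num)).const_mul (√(2 * π))⁻¹
  apply h.congr
  filter_upwards with x
  rw [gpdf_eq]
  rw [Real.rpow_one]
  ring

lemma int_absg : Integrable (fun x => |x| * gpdf x) volume := by
  have := int_xg.abs
  apply this.congr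
  filter_upwards with x
  rw [abs_mul, abs_of_nonneg (gpdf_nonneg x)]

lemma int_sqg : Integrable (fun x => x ^ 2 * gpdf x) volume := by
  have h := (integrable_rpow_mul_exp_neg_mul_sq (b := 1/2) (by norm_num)
    (s := 2) (by norm_num)).const_mul (√(2 * π))⁻¹
  apply h.congr
  filter_upwards with x
  rw [gpdf_eq]
  have : x ^ (2:ℝ) = x ^ (2:ℕ) := by
    rw [← Real.rpow_natCast x 2]; norm_num
  rw [this]
  ring

lemma int_xabsxg : Integrable (fun x => (x * |x|) * gpdf x) volume := by
  apply int_sqg.mono' ((measurable_id.mul measurable_abs).mul gpdf_meas).aestronglyMeasurable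
  filter_upwards with x
  have : ‖x * |x| * gpdf x‖ = x ^ 2 * gpdf x := by
    rw [Real.norm_eq_abs, abs_mul, abs_mul, abs_abs, abs_of_nonneg (gpdf_nonneg x),
      abs_mul_abs_self, ← sq]
  exact le_of_eq this

lemma memLp_abs2 : MemLp (fun x : ℝ => |x|) 2 (gaussianReal 0 1) := by
  have hm : AEStronglyMeasurable (fun x : ℝ => |x|) (gaussianReal 0 1) :=
    measurable_abs.aestronglyMeasurable
  rw [memLp_two_iff_integrable_sq hm]
  rw [integrable_gaussian_iff]
  apply int_sqg.congr
  filter_upwards with x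
  rw [sq_abs]

lemma nonconst_abs (c : ℝ) : ¬ ((fun x : ℝ => |x|) =ᵐ[gaussianReal 0 1] fun _ => c) := by
  intro h
  set μ := gaussianReal 0 1
  have h0 : μ {x : ℝ | |x| = c} = 0 := by
    have hsub : {x : ℝ | |x| = c} ⊆ {c, -c} := by
      intro x hx
      rcases abs_eq (le_trans (abs_nonneg x) (le_of_eq hx)) |>.mp hx with h | h
      · exact Or.inl h
      · exact Or.inr h
    have hv : (volume : Measure ℝ) {c, -c} = 0 :=
      (((Set.finite_singleton (-c)).insert c).countable).measure_zero _
    exact measure_mono_null hsub (gaussianReal_absolutelyContinuous 0 one_ne_zero hv)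
  have hc : μ {x : ℝ | ¬ (|x| = c)} = 0 := h
  have : (μ Set.univ) ≤ μ {x : ℝ | |x| = c} + μ {x : ℝ | ¬ (|x| = c)} := by
    calc μ Set.univ ≤ μ ({x : ℝ | |x| = c} ∪ {x : ℝ | ¬ (|x| = c)}) := by
          apply measure_mono
          intro x _
          by_cases hx : |x| = c
          · exact Or.inl hx
          · exact Or.inr hx
      _ ≤ _ := measure_union_le _ _
  rw [h0, hc, measure_univ] at this
  simp at this

lemma var_abs_pos : 0 < variance (fun x : ℝ => |x|) (gaussianReal 0 1) := by
  rcases lt_or_eq_of_le (variance_nonneg (fun x : ℝ => |x|) (gaussianReal 0 1)) with h | h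
  · exact h
  exfalso
  have hev : evariance (fun x : ℝ => |x|) (gaussianReal 0 1) = 0 := by
    have hlt := memLp_abs2.evariance_lt_top
    have := h.symm
    rw [variance, ENNReal.toReal_eq_zero_iff] at this
    rcases this with h' | h'
    · exact h'
    · exact absurd h' hlt.ne
  have := (evariance_eq_zero_iff measurable_abs.aemeasurable).mp hev
  exact nonconst_abs _ this


/-- there exist uncorrelated but dependent random variables
`X₁ = Z`, `X₂ = |Z|` (for `Z` standard Gaussian, modelled here as the identity
on `ℝ` with the standard Gaussian measure) together with measurable functions
`f₁ = |·|`, `f₂ = id` such that `f₁(X₁) = f₂(X₂)` everywhere, `f₁(X₁)` is not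
(almost surely) constant, and `f₁(X₁)`, `f₂(X₂)` have Pearson correlation 1. -/
theorem uncorrelated_but_perfectly_concurved :
    ∃ (X₁ X₂ f₁ f₂ : ℝ → ℝ),
      let μ := gaussianReal 0 1
      Measurable X₁ ∧ Measurable X₂ ∧ Measurable f₁ ∧ Measurable f₂ ∧
      X₁ = id ∧ X₂ = (fun z => |z|) ∧ f₁ = (fun x => |x|) ∧ f₂ = id ∧
      -- uncorrelated:
      (∫ z, X₁ z * X₂ z ∂μ) - (∫ z, X₁ z ∂μ) * (∫ z, X₂ z ∂μ) = 0 ∧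
      -- but not independent:
      ¬ IndepFun X₁ X₂ μ ∧
      -- perfectly concurved:
      (∀ z, f₁ (X₁ z) = f₂ (X₂ z)) ∧
      -- f₁(X₁) is non-constant:
      (¬ ∃ c : ℝ, ∀ᵐ z ∂μ, f₁ (X₁ z) = c) ∧
      -- correlation of f₁(X₁) and f₂(X₂) equals 1:
      ((∫ z, f₁ (X₁ z) * f₂ (X₂ z) ∂μ) -
          (∫ z, f₁ (X₁ z) ∂μ) * (∫ z, f₂ (X₂ z) ∂μ)) /
        (Real.sqrt (variance (f₁ ∘ X₁) μ) * Real.sqrt (variance (f₂ ∘ X₂) μ)) = 1 := by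
  refine ⟨id, fun z => |z|, fun x => |x|, id, ?_⟩
  intro μ
  have hμ : μ = gaussianReal 0 1 := rfl
  -- key integrals
  have hE0 : (∫ z, z ∂μ) = 0 := by
    rw [hμ, integral_gaussian_eq]
    exact odd_integral_zero (fun x => by rw [gpdf_even]; ring)
  have hE1 : (∫ z, z * |z| ∂μ) = 0 := by
    rw [hμ, integral_gaussian_eq]
    exact odd_integral_zero (fun x => by rw [gpdf_even, abs_neg]; ring)
  have habscomp1 : (fun x : ℝ => |x|) ∘ id = fun x : ℝ => |x| := rfl
  have habscomp2 : id ∘ (fun z : ℝ => |z|) = fun x : ℝ => |x| := rfl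
  have hW : variance ((fun x : ℝ => |x|) ∘ id) μ = variance (fun x : ℝ => |x|) μ := by
    rw [habscomp1]
  have hWpos : 0 < variance (fun x : ℝ => |x|) μ := var_abs_pos
  have hVdef : variance (fun x : ℝ => |x|) μ
      = (∫ z, |z| * |z| ∂μ) - (∫ z, |z| ∂μ) * (∫ z, |z| ∂μ) := by
    rw [hμ, variance_eq_sub memLp_abs2]
    congr 1
    · apply integral_congr_ae
      filter_upwards with x
      simp [sq]
    · rw [sq]
  refine ⟨measurable_id, measurable_abs, measurable_abs, measurable_id,
    rfl, rfl, rfl, rfl, ?_, ?_, fun z => rfl, ?_, ?_⟩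
  · show (∫ z, z * |z| ∂μ) - (∫ z, z ∂μ) * (∫ z, |z| ∂μ) = 0
    rw [hE1, hE0, zero_mul, sub_zero]
  · intro h
    have hcomp : IndepFun (fun x : ℝ => |x|) (fun x : ℝ => |x|) μ := by
      have := h.comp (measurable_abs) (measurable_id)
      rwa [habscomp1, habscomp2] at this
    have hmul := hcomp.integral_mul_eq_mul_integral
      measurable_abs.aestronglyMeasurable measurable_abs.aestronglyMeasurable
    have hmm : (∫ z, |z| * |z| ∂μ) = (∫ z, |z| ∂μ) * (∫ z, |z| ∂μ) := by
      have : ((fun x : ℝ => |x|) * fun x : ℝ => |x|) = fun z : ℝ => |z| * |z| := rfl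
      rw [← this]; exact hmul
    rw [hVdef, hmm, sub_self] at hWpos
    exact lt_irrefl _ hWpos
  · rintro ⟨c, hc⟩
    exact nonconst_abs c (by rw [← hμ]; exact hc)
  · show ((∫ z, |z| * |z| ∂μ) - (∫ z, |z| ∂μ) * (∫ z, |z| ∂μ)) /
        (Real.sqrt (variance (fun x : ℝ => |x|) μ) *
          Real.sqrt (variance (fun x : ℝ => |x|) μ)) = 1
    rw [← hVdef, Real.mul_self_sqrt hWpos.le, div_self hWpos.ne']
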